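/- For n ≥ 3 and 2 ≤ k ≤ n, let ξ be a C² real function on an interval with |ξ'| > 1 and satisfying the ODE e^{2kξ}(1 − |ξ'|²)^{k−1}[ξ'' + ((n−2k)/(2k))(1 − |ξ'|²)] = (−1)ᵏ n/(2k). Then the quantity H(ξ,ξ') := e^{(2k−n)ξ}(1 − |ξ'|²)ᵏ − (−1)ᵏ e^{−nξ} is constant along the solution, i.e. d/dt [H(ξ(t),ξ'(t))] = 0. -/

import Mathlib

open Real

/-- The first integral `H(x,y) = e^{(2k−n)x}(1 − y²)ᵏ − (−1)ᵏ e^{−nx}`. -/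
noncomputable def Hfun (n k : ℕ) (x y : ℝ) : ℝ :=
  Real.exp ((2 * (k : ℝ) - n) * x) * (1 - y ^ 2) ^ k - (-1 : ℝ) ^ k * Real.exp (-(n : ℝ) * x)

/-- along a `C²` solution of
`e^{2kξ}(1 − |ξ'|²)^{k−1}[ξ'' + ((n−2k)/(2k))(1 − |ξ'|²)] = (−1)ᵏ n/(2k)` with `|ξ'| > 1`,
the quantity `H(ξ, ξ')` is constant, i.e. `d/dt H(ξ(t), ξ'(t)) = 0`. -/
theorem stmt3 (n k : ℕ) (hn : 3 ≤ n) (hk2 : 2 ≤ k) (hkn : k ≤ n)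
    (I : Set ℝ) (hI : IsOpen I) (hconn : I.OrdConnected)
    (ξ ξ' ξ'' : ℝ → ℝ)
    (hderiv1 : ∀ t ∈ I, HasDerivAt ξ (ξ' t) t)
    (hderiv2 : ∀ t ∈ I, HasDerivAt ξ' (ξ'' t) t)
    (hgrad : ∀ t ∈ I, 1 < |ξ' t|)
    (hODE : ∀ t ∈ I,
      Real.exp (2 * k * ξ t) * (1 - (ξ' t) ^ 2) ^ (k - 1) *
          (ξ'' t + (((n : ℝ) - 2 * k) / (2 * k)) * (1 - (ξ' t) ^ 2))
        = (-1 : ℝ) ^ k * n / (2 * k)) :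
    ∀ t ∈ I, HasDerivAt (fun s => Hfun n k (ξ s) (ξ' s)) 0 t := by
  intro t ht
  have hb := hderiv1 t ht
  have hc := hderiv2 t ht
  set a := ξ t with ha
  set b := ξ' t with hbdef
  set c := ξ'' t with hcdef
  have hkpos : (0 : ℝ) < (k : ℝ) := by
    exact_mod_cast Nat.lt_of_lt_of_le Nat.zero_lt_two hk2
  have h1 : HasDerivAt (fun s => Real.exp ((2 * (k : ℝ) - n) * ξ s))
      ((2 * (k : ℝ) - n) * b * Real.exp ((2 * (k : ℝ) - n) * a)) t := by
    have := (hb.const_mul (2 * (k : ℝ) - n)).exp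
    convert this using 1
    ring
  have h2 : HasDerivAt (fun s => (1 - (ξ' s) ^ 2) ^ k)
      ((k : ℝ) * (1 - b ^ 2) ^ (k - 1) * (-(2 * b * c))) t := by
    have := ((hc.pow 2).const_sub 1).pow k
    refine this.congr_deriv ?_
    rw [Pi.pow_apply, ← hbdef]
    push_cast
    ring
  have h3 : HasDerivAt (fun s => (-1 : ℝ) ^ k * Real.exp (-(n : ℝ) * ξ s))
      ((-1 : ℝ) ^ k * (-(n : ℝ) * b * Real.exp (-(n : ℝ) * a))) t := by
    have := ((hb.const_mul (-(n : ℝ))).exp).const_mul ((-1 : ℝ) ^ k)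
    refine this.congr_deriv ?_
    ring
  have hH := (h1.mul h2).sub h3
  simp only [Hfun]
  refine hH.congr_deriv ?_
  symm
  -- Now prove 0 = derivative expression
  have hODE' := hODE t ht
  have h2k : (2 * (k : ℝ)) ≠ 0 := by positivity
  have hODE2 : Real.exp (2 * (k : ℝ) * a) * (1 - b ^ 2) ^ (k - 1) *
      (2 * (k : ℝ) * c + ((n : ℝ) - 2 * k) * (1 - b ^ 2)) = (-1 : ℝ) ^ k * n := by
    field_simp at hODE'
    linear_combination hODE'
  have hexp : Real.exp ((2 * (k : ℝ) - n) * a)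
      = Real.exp (2 * (k : ℝ) * a) * Real.exp (-(n : ℝ) * a) := by
    rw [← Real.exp_add]; ring_nf
  have hpk : (1 - b ^ 2) ^ k = (1 - b ^ 2) ^ (k - 1) * (1 - b ^ 2) := by
    conv_lhs => rw [← Nat.succ_pred_eq_of_pos (by omega : 0 < k)]
    rw [pow_succ, Nat.pred_eq_sub_one]
  rw [hexp, hpk]
  linear_combination (b * Real.exp (-(n : ℝ) * a)) * hODE2
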